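/- arXiv:2105.04793 — 5 statements merged into one kernel-verified Lean document; each statement's English description precedes it below -/
import Mathlib

section
/- Let f : 2^Ω → ℝ be a normalized (f(∅)=0), monotone, submodular set function on a finite ground set Ω with curvature ν = 1 - min_{x∈Ω} (f(Ω) - f(Ω\{x}))/f(x) (assuming f(x) > 0 for all x). Then for every subset S ⊆ Ω, f(S) ≥ (1-ν) · ∑_{a∈S} f({a}). -/
open Finset

theorem stmt0 {Ω : Type*} [Fintype Ω] [DecidableEq Ω] [Nonempty Ω]
    (f : Finset Ω → ℝ)
    (hnorm : f ∅ = 0)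
    (hmono : ∀ A B : Finset Ω, A ⊆ B → f A ≤ f B)
    (hsub : ∀ A B : Finset Ω, A ⊆ B → ∀ x ∉ B,
      f (insert x A) - f A ≥ f (insert x B) - f B)
    (hpos : ∀ x : Ω, 0 < f {x})
    (ν : ℝ)
    (hν : ν = 1 - (univ : Finset Ω).inf' univ_nonempty
      (fun x => (f univ - f (univ \ {x})) / f {x}))
    (S : Finset Ω) :
    f S ≥ (1 - ν) * ∑ a ∈ S, f {a} := by
  have hc : ∀ a : Ω, (1 - ν) * f {a} ≤ f univ - f (univ \ {a}) := by
    intro a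
    have h1 : (univ : Finset Ω).inf' univ_nonempty
        (fun x => (f univ - f (univ \ {x})) / f {x})
        ≤ (f univ - f (univ \ {a})) / f {a} := inf'_le _ (mem_univ a)
    have h2 : (1 - ν) = (univ : Finset Ω).inf' univ_nonempty
        (fun x => (f univ - f (univ \ {x})) / f {x}) := by rw [hν]; ring
    rw [h2]
    exact (le_div_iff₀ (hpos a)).mp h1
  induction S using Finset.induction_on with
  | empty => simp [hnorm]
  | @insert a S h ih =>
    have hSsub : S ⊆ univ \ {a} := by
      intro x hx
      rw [mem_sdiff, mem_singleton]
      exact ⟨mem_univ x, fun heq => h (heq ▸ hx)⟩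
    have ha : a ∉ univ \ {a} := by simp
    have hstep := hsub S (univ \ {a}) hSsub a ha
    rw [sdiff_singleton_eq_erase, insert_erase (mem_univ a)] at hstep
    rw [sum_insert h, mul_add]
    have := hc a
    rw [sdiff_singleton_eq_erase] at this
    linarith
end

section
/- Let f : 2^Ω → ℝ be monotone and submodular with curvature ν ∈ [0,1], and suppose elements of a set A = {a₁,...,aₖ} satisfy f({aᵢ}) ≥ f({bᵢ}) for some injectively chosen elements b₁,...,bₖ of a set B. Then ∑_{i} f({aᵢ}) ≥ f({b₁,...,bₖ}) and hence f(A) ≥ (1-ν) f({b₁,...,bₖ}). -/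
open Finset

lemma subadd_aux {Ω : Type*} [Fintype Ω] [DecidableEq Ω]
    (f : Finset Ω → ℝ) (hnorm : f ∅ = 0)
    (hmono : ∀ A B : Finset Ω, A ⊆ B → f A ≤ f B)
    (hsub : ∀ A B : Finset Ω, f A + f B ≥ f (A ∪ B) + f (A ∩ B)) :
    ∀ S : Finset Ω, f S ≤ ∑ x ∈ S, f {x} := by
  intro S
  induction S using Finset.induction_on with
  | empty => simp [hnorm]
  | @insert x S hx ih =>
    rw [Finset.sum_insert hx]
    have h := hsub {x} S
    have hi : ({x} : Finset Ω) ∩ S = ∅ := by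
      simp [Finset.singleton_inter_of_notMem hx]
    rw [hi, hnorm] at h
    have : f (insert x S) ≤ f {x} + f S := by
      have : ({x} : Finset Ω) ∪ S = insert x S := by rw [Finset.insert_eq]
      linarith [this ▸ h]
    linarith

lemma curv_aux {Ω : Type*} [Fintype Ω] [DecidableEq Ω]
    (f : Finset Ω → ℝ) (hnorm : f ∅ = 0)
    (hsub : ∀ A B : Finset Ω, f A + f B ≥ f (A ∪ B) + f (A ∩ B)) :
    ∀ S : Finset Ω, f S ≥ ∑ x ∈ S, (f univ - f (univ \ {x})) := by
  intro S
  induction S using Finset.induction_on with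
  | empty => simp [hnorm]
  | @insert x S hx ih =>
    rw [Finset.sum_insert hx]
    have h := hsub (insert x S) (univ \ {x})
    have hu : insert x S ∪ (univ \ {x}) = univ := by
      apply Finset.eq_univ_of_forall
      intro y
      by_cases hy : y = x <;> simp [hy]
    have hi : insert x S ∩ (univ \ {x}) = S := by
      ext y
      simp only [Finset.mem_inter, Finset.mem_insert, Finset.mem_sdiff,
        Finset.mem_univ, Finset.mem_singleton, true_and]
      constructor
      · rintro ⟨h1 | h1, h2⟩
        · exact absurd h1 h2
        · exact h1
      · intro hy
        exact ⟨Or.inr hy, fun h => hx (h ▸ hy)⟩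
    rw [hu, hi] at h
    linarith

theorem stmt3 {Ω : Type*} [Fintype Ω] [DecidableEq Ω] [Nonempty Ω]
    (f : Finset Ω → ℝ)
    (hnorm : f ∅ = 0)
    (hmono : ∀ A B : Finset Ω, A ⊆ B → f A ≤ f B)
    (hsub : ∀ A B : Finset Ω, f A + f B ≥ f (A ∪ B) + f (A ∩ B))
    (hpos : ∀ x : Ω, 0 < f {x})
    (ν : ℝ)
    (hν : ν = 1 - (univ : Finset Ω).inf' univ_nonempty
      (fun x => (f univ - f (univ \ {x})) / f {x}))
    (k : ℕ) (a b : Fin k → Ω)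
    (ha : Function.Injective a) (hb : Function.Injective b)
    (hab : ∀ i, f {a i} ≥ f {b i}) :
    (∑ i, f {a i}) ≥ f (Finset.image b Finset.univ) ∧
    f (Finset.image a Finset.univ) ≥ (1 - ν) * f (Finset.image b Finset.univ) := by
  have hsumb : f (Finset.image b Finset.univ) ≤ ∑ i, f {b i} := by
    calc f (Finset.image b Finset.univ) ≤ ∑ x ∈ Finset.image b Finset.univ, f {x} :=
          subadd_aux f hnorm hmono hsub _
      _ = ∑ i, f {b i} := Finset.sum_image (fun i _ j _ h => hb h)
  have h1 : (∑ i, f {a i}) ≥ f (Finset.image b Finset.univ) := by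
    have : ∑ i, f {b i} ≤ ∑ i, f {a i} := Finset.sum_le_sum fun i _ => hab i
    linarith
  refine ⟨h1, ?_⟩
  set c : ℝ := (univ : Finset Ω).inf' univ_nonempty
      (fun x => (f univ - f (univ \ {x})) / f {x}) with hc
  have h1ν : 1 - ν = c := by rw [hν]; ring
  have hcle : ∀ x : Ω, c * f {x} ≤ f univ - f (univ \ {x}) := by
    intro x
    have := Finset.inf'_le (fun x => (f univ - f (univ \ {x})) / f {x})
      (Finset.mem_univ x)
    rw [← hc] at this
    calc c * f {x} ≤ ((f univ - f (univ \ {x})) / f {x}) * f {x} :=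
          mul_le_mul_of_nonneg_right this (le_of_lt (hpos x))
      _ = f univ - f (univ \ {x}) := div_mul_cancel₀ _ (ne_of_gt (hpos x))
  have hc0 : 0 ≤ c := by
    rw [hc]
    apply Finset.le_inf'
    intro x _
    apply div_nonneg _ (le_of_lt (hpos x))
    have := hmono (univ \ {x}) univ (Finset.sdiff_subset)
    linarith
  have key : f (Finset.image a Finset.univ) ≥ c * ∑ i, f {a i} := by
    calc f (Finset.image a Finset.univ)
        ≥ ∑ x ∈ Finset.image a Finset.univ, (f univ - f (univ \ {x})) :=
          curv_aux f hnorm hsub _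
      _ ≥ ∑ x ∈ Finset.image a Finset.univ, c * f {x} :=
          Finset.sum_le_sum fun x _ => hcle x
      _ = c * ∑ x ∈ Finset.image a Finset.univ, f {x} := by rw [Finset.mul_sum]
      _ = c * ∑ i, f {a i} := by
          rw [Finset.sum_image (fun i _ j _ h => ha h)]
  rw [h1ν]
  calc f (Finset.image a Finset.univ) ≥ c * ∑ i, f {a i} := key
    _ ≥ c * f (Finset.image b Finset.univ) := by
        apply mul_le_mul_of_nonneg_left h1 hc0
end

section
/- Myopic maximization achieves a (1-ν) resilient approximation on a uniform matroid: let f : 2^Ω → ℝ be normalized, monotone, submodular with curvature ν, let k ≥ α be naturals, and let A^sol be a set of k elements of Ω with the k largest singleton values f({x}) (i.e., f({a}) ≥ f({b}) for all a ∈ A^sol and b ∉ A^sol). Then min_{B ⊆ A^sol, |B| ≤ α} f(A^sol \ B) ≥ (1-ν) · max_{|A| ≤ k} min_{B ⊆ A, |B| ≤ α} f(A \ B). -/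
open Finset

noncomputable def resVal {Ω : Type*} [DecidableEq Ω] (α : ℕ)
    (f : Finset Ω → ℝ) (A : Finset Ω) : ℝ :=
  (A.powerset.filter (fun B => B.card ≤ α)).inf' ⟨∅, by simp⟩ (fun B => f (A \ B))

theorem stmt5 {Ω : Type*} [Fintype Ω] [DecidableEq Ω] [Nonempty Ω]
    (f : Finset Ω → ℝ)
    (hnorm : f ∅ = 0)
    (hmono : ∀ A B : Finset Ω, A ⊆ B → f A ≤ f B)
    (hsub : ∀ A B : Finset Ω, f A + f B ≥ f (A ∪ B) + f (A ∩ B))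
    (hpos : ∀ x : Ω, 0 < f {x})
    (ν : ℝ)
    (hν : ν = 1 - (univ : Finset Ω).inf' univ_nonempty
      (fun x => (f univ - f (univ \ {x})) / f {x}))
    (α k : ℕ) (hαk : α ≤ k) (hk : k ≤ Fintype.card Ω)
    (Asol : Finset Ω) (hcard : Asol.card = k)
    (hgreedy : ∀ a ∈ Asol, ∀ b ∉ Asol, f {a} ≥ f {b}) :
    resVal α f Asol ≥
      (1 - ν) * ((univ : Finset Ω).powerset.filter (fun A => A.card ≤ k)).sup'
        ⟨∅, by simp⟩ (fun A => resVal α f A) := by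
  set γ : ℝ := (univ : Finset Ω).inf' univ_nonempty
      (fun x => (f univ - f (univ \ {x})) / f {x}) with hγdef
  have hνγ : 1 - ν = γ := by rw [hν]; ring
  rw [hνγ]
  -- γ ≥ 0
  have hγ0 : 0 ≤ γ := by
    apply Finset.le_inf'
    intro x _
    exact div_nonneg (sub_nonneg.mpr (hmono _ _ (sdiff_subset))) (le_of_lt (hpos x))
  -- marginal bound
  have hmarg : ∀ (x : Ω) (S : Finset Ω), x ∈ S → γ * f {x} + f (S \ {x}) ≤ f S := by
    intro x S hxS
    have h1 : γ ≤ (f univ - f (univ \ {x})) / f {x} :=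
      Finset.inf'_le _ (mem_univ x)
    have h2 : γ * f {x} ≤ f univ - f (univ \ {x}) :=
      (le_div_iff₀ (hpos x)).mp h1
    have h3 := hsub S (univ \ {x})
    have hU : S ∪ (univ \ {x}) = univ := by
      ext a
      simp only [mem_union, mem_sdiff, mem_univ, mem_singleton, iff_true]
      by_cases h : a = x
      · exact Or.inl (h ▸ hxS)
      · exact Or.inr ⟨trivial, h⟩
    have hI : S ∩ (univ \ {x}) = S \ {x} := by
      ext a; simp [mem_inter, mem_sdiff]
    rw [hU, hI] at h3
    linarith
  -- lower bound : γ * sum of singletons ≤ f S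
  have hlow : ∀ S : Finset Ω, γ * ∑ x ∈ S, f {x} ≤ f S := by
    intro S
    induction S using Finset.induction_on with
    | empty => simp [hnorm]
    | insert x s hx ih =>
      have h1 := hmarg x (insert x s) (mem_insert_self x s)
      have h2 : (insert x s) \ {x} = s := by
        rw [← Finset.erase_eq, Finset.erase_insert hx]
      rw [h2] at h1
      rw [Finset.sum_insert hx]
      nlinarith [ih]
  -- upper bound : f S ≤ sum of singletons
  have hub : ∀ S : Finset Ω, f S ≤ ∑ x ∈ S, f {x} := by
    intro S
    induction S using Finset.induction_on with
    | empty => simp [hnorm]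
    | insert x s hx ih =>
      have h1 := hsub s {x}
      have hU : s ∪ {x} = insert x s := by
        rw [Finset.union_comm, ← Finset.insert_eq]
      have hI : s ∩ {x} = ∅ := by
        ext a; simp only [mem_inter, mem_singleton, notMem_empty, iff_false, not_and]
        intro ha h; exact hx (h ▸ ha)
      rw [hU, hI, hnorm] at h1
      rw [Finset.sum_insert hx]
      linarith
  have hnonneg : ∀ S : Finset Ω, 0 ≤ f S := by
    intro S; rw [← hnorm]; exact hmono _ _ (Finset.empty_subset S)
  -- key comparison lemma
  have key : ∀ (X Y : Finset Ω), X.card ≤ Y.card → (∀ x ∈ X, x ∉ Asol) → Y ⊆ Asol →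
      ∑ x ∈ X, f {x} ≤ ∑ y ∈ Y, f {y} := by
    intro X Y hc hX hY
    rcases Y.eq_empty_or_nonempty with rfl | hYne
    · have hX0 : X = ∅ := Finset.card_eq_zero.mp (Nat.le_antisymm (by simpa using hc) (Nat.zero_le _))
      simp [hX0]
    · obtain ⟨y0, hy0Y, hy0min⟩ := Finset.exists_min_image Y (fun y => f {y}) hYne
      calc ∑ x ∈ X, f {x} ≤ X.card • f {y0} :=
            Finset.sum_le_card_nsmul _ _ _ (fun x hx => hgreedy y0 (hY hy0Y) x (hX x hx))
        _ ≤ Y.card • f {y0} := by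
            rw [nsmul_eq_mul, nsmul_eq_mul]
            exact mul_le_mul_of_nonneg_right (by exact_mod_cast hc) (le_of_lt (hpos y0))
        _ ≤ ∑ y ∈ Y, f {y} := Finset.card_nsmul_le_sum Y _ _ (fun y hy => hy0min y hy)
  -- pick the maximizer A₀
  obtain ⟨A₀, hA₀mem, hA₀eq⟩ := Finset.exists_mem_eq_sup'
    (⟨∅, by simp⟩ : ((univ : Finset Ω).powerset.filter (fun A => A.card ≤ k)).Nonempty)
    (fun A => resVal α f A)
  rw [hA₀eq]
  have hA₀k : A₀.card ≤ k := (Finset.mem_filter.mp hA₀mem).2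
  -- pick the minimizer Bm for Asol
  obtain ⟨Bm, hBmmem, hBmeq⟩ := Finset.exists_mem_eq_inf'
    (⟨∅, by simp⟩ : (Asol.powerset.filter (fun B => B.card ≤ α)).Nonempty)
    (fun B => f (Asol \ B))
  have hBmsub : Bm ⊆ Asol := Finset.mem_powerset.mp (Finset.mem_filter.mp hBmmem).1
  have hBmcard : Bm.card ≤ α := (Finset.mem_filter.mp hBmmem).2
  have hres : resVal α f Asol = f (Asol \ Bm) := hBmeq
  -- extend Bm to B' of card α inside Asol
  obtain ⟨B', hBmB', hB'sub, hB'card⟩ :=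
    Finset.exists_subsuperset_card_eq hBmsub hBmcard (by rw [hcard]; exact hαk)
  set T : Finset Ω := Asol \ B' with hTdef
  have hTcard : T.card = k - α := by
    rw [hTdef, Finset.card_sdiff_of_subset hB'sub, hcard, hB'card]
  have hTsub : T ⊆ Asol := sdiff_subset
  -- resVal Asol ≥ γ * Σ_T
  have step1 : γ * ∑ x ∈ T, f {x} ≤ resVal α f Asol := by
    rw [hres]
    calc γ * ∑ x ∈ T, f {x} ≤ γ * ∑ x ∈ Asol \ Bm, f {x} := by
          apply mul_le_mul_of_nonneg_left _ hγ0
          apply Finset.sum_le_sum_of_subset_of_nonneg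
          · exact Finset.sdiff_subset_sdiff (Finset.Subset.refl _) hBmB'
          · intro x _ _; exact le_of_lt (hpos x)
      _ ≤ f (Asol \ Bm) := hlow _
  -- construct B for A₀
  set P : Finset Ω := A₀ ∩ B' with hPdef
  set X : Finset Ω := A₀ \ Asol with hXdef
  have hPcard : P.card ≤ α := by
    rw [← hB'card]; exact Finset.card_le_card inter_subset_right
  obtain ⟨C, hCX, hCcard⟩ := Finset.exists_subset_card_eq
    (min_le_right (α - P.card) X.card)
  set B : Finset Ω := P ∪ C with hBdef
  have hCA₀ : ∀ a ∈ C, a ∈ A₀ ∧ a ∉ Asol := fun a ha => Finset.mem_sdiff.mp (hCX ha)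
  have hBsubA₀ : B ⊆ A₀ := by
    rw [hBdef]
    apply Finset.union_subset inter_subset_left
    intro a ha; exact (hCA₀ a ha).1
  have hBcard : B.card ≤ α := by
    rw [hBdef]
    have h1 := Finset.card_union_le P C
    have h2 : C.card ≤ α - P.card := hCcard ▸ min_le_left _ _
    omega
  have hBmem : B ∈ A₀.powerset.filter (fun B => B.card ≤ α) := by
    rw [Finset.mem_filter, Finset.mem_powerset]; exact ⟨hBsubA₀, hBcard⟩
  -- split A₀ \ B
  have hsplit : A₀ \ B = (A₀ ∩ T) ∪ (X \ C) := by
    ext a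
    have hB'' : a ∈ B' → a ∈ Asol := fun h => hB'sub h
    have hC' : a ∈ C → a ∈ A₀ ∧ a ∉ Asol := hCA₀ a
    simp only [hBdef, hTdef, hXdef, hPdef, Finset.mem_sdiff, Finset.mem_union,
      Finset.mem_inter]
    by_cases h1 : a ∈ Asol <;> by_cases h2 : a ∈ B' <;> tauto
  have hdisj : Disjoint (A₀ ∩ T) (X \ C) := by
    rw [Finset.disjoint_left]
    intro a ha ha'
    exact (Finset.mem_sdiff.mp (Finset.mem_sdiff.mp ha' |>.1)).2 (hTsub (Finset.mem_inter.mp ha).2)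
  -- card arithmetic : |X \ C| ≤ |T \ A₀|
  have hdecomp : A₀.card = (A₀ ∩ T).card + P.card + X.card := by
    have h1 : (A₀ ∩ Asol).card + (A₀ \ Asol).card = A₀.card :=
      Finset.card_inter_add_card_sdiff A₀ Asol
    have h2 : A₀ ∩ Asol = (A₀ ∩ T) ∪ (A₀ ∩ B') := by
      rw [← Finset.inter_union_distrib_left, hTdef, Finset.sdiff_union_of_subset hB'sub]
    have h3 : Disjoint (A₀ ∩ T) (A₀ ∩ B') := by
      apply Finset.disjoint_left.mpr
      intro a ha ha'
      exact (Finset.mem_sdiff.mp (Finset.mem_inter.mp ha).2).2 (Finset.mem_inter.mp ha').2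
    have h4 : (A₀ ∩ Asol).card = (A₀ ∩ T).card + (A₀ ∩ B').card := by
      rw [h2, Finset.card_union_of_disjoint h3]
    rw [hXdef, hPdef]; omega
  have hTA₀ : (T ∩ A₀).card + (T \ A₀).card = T.card :=
    Finset.card_inter_add_card_sdiff T A₀
  have hTAeq : (T ∩ A₀).card = (A₀ ∩ T).card := by rw [Finset.inter_comm]
  have hXCcard : (X \ C).card ≤ (T \ A₀).card := by
    have h1 : (X \ C).card = X.card - C.card := Finset.card_sdiff_of_subset hCX
    have h2 : C.card = min (α - P.card) X.card := hCcard
    omega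
  -- sum comparison
  have hsumXC : ∑ x ∈ X \ C, f {x} ≤ ∑ y ∈ T \ A₀, f {y} := by
    apply key _ _ hXCcard
    · intro x hx; exact (Finset.mem_sdiff.mp (Finset.mem_sdiff.mp hx).1).2
    · exact Finset.Subset.trans sdiff_subset hTsub
  -- resVal A₀ ≤ Σ_T
  have step2 : resVal α f A₀ ≤ ∑ x ∈ T, f {x} := by
    have h1 : resVal α f A₀ ≤ f (A₀ \ B) := Finset.inf'_le _ hBmem
    have h2 : f (A₀ \ B) ≤ ∑ x ∈ A₀ \ B, f {x} := hub _
    have h3 : ∑ x ∈ A₀ \ B, f {x} = ∑ x ∈ A₀ ∩ T, f {x} + ∑ x ∈ X \ C, f {x} := by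
      rw [hsplit, Finset.sum_union hdisj]
    have h4 : ∑ x ∈ T, f {x} = ∑ x ∈ T ∩ A₀, f {x} + ∑ x ∈ T \ A₀, f {x} :=
      (Finset.sum_inter_add_sum_sdiff T A₀ _).symm
    have h5 : ∑ x ∈ T ∩ A₀, f {x} = ∑ x ∈ A₀ ∩ T, f {x} := by rw [Finset.inter_comm]
    linarith
  calc γ * resVal α f A₀ ≤ γ * ∑ x ∈ T, f {x} := mul_le_mul_of_nonneg_left step2 hγ0
    _ ≤ resVal α f Asol := step1
end

section
/- Let f be normalized, monotone, submodular with curvature ν, and let A, A* be two bases of a matroid (Ω, I) with π : A → A* a bijection fixing A ∩ A* pointwise and satisfying f({a}) ≥ f({π(a)}) for all a ∈ A. Then for every subset R ⊆ A, f(R) ≥ (1-ν) · f(π(R)), where π(R) = {π(a) : a ∈ R}. -/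
open Finset

theorem stmt6 {Ω : Type*} [Fintype Ω] [DecidableEq Ω] [Nonempty Ω]
    (f : Finset Ω → ℝ)
    (hnorm : f ∅ = 0)
    (hmono : ∀ A B : Finset Ω, A ⊆ B → f A ≤ f B)
    (hsub : ∀ A B : Finset Ω, f A + f B ≥ f (A ∪ B) + f (A ∩ B))
    (hpos : ∀ x : Ω, 0 < f {x})
    (ν : ℝ)
    (hν : ν = 1 - (univ : Finset Ω).inf' univ_nonempty
      (fun x => (f univ - f (univ \ {x})) / f {x}))
    (M : Matroid Ω) (A Astar : Finset Ω)
    (hA : M.IsBase (A : Set Ω)) (hAstar : M.IsBase (Astar : Set Ω))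
    (π : Ω → Ω)
    (hbij : Set.BijOn π (A : Set Ω) (Astar : Set Ω))
    (hfix : ∀ a ∈ A ∩ Astar, π a = a)
    (hval : ∀ a ∈ A, f {a} ≥ f {π a})
    (R : Finset Ω) (hR : R ⊆ A) :
    f R ≥ (1 - ν) * f (R.image π) := by
  set c : ℝ := (univ : Finset Ω).inf' univ_nonempty
      (fun x => (f univ - f (univ \ {x})) / f {x}) with hc
  have h1ν : 1 - ν = c := by rw [hν]; ring
  -- c ≥ 0
  have hc0 : 0 ≤ c := by
    apply le_inf'
    intro x _
    apply div_nonneg _ (hpos x).le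
    have := hmono (univ \ {x}) univ (sdiff_subset)
    linarith
  -- c * f{x} ≤ f univ - f (univ \ {x})
  have hcx : ∀ x : Ω, c * f {x} ≤ f univ - f (univ \ {x}) := by
    intro x
    have h : c ≤ (f univ - f (univ \ {x})) / f {x} := inf'_le _ (mem_univ x)
    rw [le_div_iff₀ (hpos x)] at h
    linarith [h]
  -- subadditivity: f S ≤ ∑ f{x}
  have hsubadd : ∀ S : Finset Ω, f S ≤ ∑ x ∈ S, f {x} := by
    intro S
    induction S using Finset.induction_on with
    | empty => simp [hnorm]
    | @insert a S ha ih =>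
      have h := hsub {a} S
      have hu : ({a} : Finset Ω) ∪ S = insert a S := by
        rw [Finset.insert_eq]
      have hi : ({a} : Finset Ω) ∩ S = ∅ := by
        simp [Finset.singleton_inter_of_notMem ha]
      rw [hu, hi, hnorm] at h
      rw [Finset.sum_insert ha]
      linarith
  -- f R ≥ ∑_{x ∈ R} (f univ - f (univ \ {x}))
  have hlow : ∀ S : Finset Ω, (∑ x ∈ S, (f univ - f (univ \ {x}))) ≤ f S := by
    intro S
    induction S using Finset.induction_on with
    | empty => simp [hnorm]
    | @insert a S ha ih =>
      have h := hsub (univ \ {a}) (insert a S)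
      have hu : (univ \ {a}) ∪ insert a S = univ := by
        ext x; by_cases hx : x = a <;> simp [hx]
      have hi : (univ \ {a}) ∩ insert a S = S := by
        ext x
        by_cases hx : x = a <;> simp [hx]
        · intro h'; exact absurd h' ha
      rw [hu, hi] at h
      rw [Finset.sum_insert ha]
      linarith
  -- chain
  have hinj : Set.InjOn π (R : Set Ω) :=
    hbij.injOn.mono (by exact_mod_cast hR)
  have hsum_image : ∑ y ∈ R.image π, f {y} = ∑ x ∈ R, f {π x} := by
    rw [Finset.sum_image]
    intro x hx y hy hxy
    exact hinj (by exact_mod_cast hx) (by exact_mod_cast hy) hxy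
  calc (1 - ν) * f (R.image π) = c * f (R.image π) := by rw [h1ν]
    _ ≤ c * ∑ y ∈ R.image π, f {y} := by
        exact mul_le_mul_of_nonneg_left (hsubadd _) hc0
    _ = ∑ x ∈ R, c * f {π x} := by rw [hsum_image, Finset.mul_sum]
    _ ≤ ∑ x ∈ R, c * f {x} := by
        apply Finset.sum_le_sum
        intro x hx
        exact mul_le_mul_of_nonneg_left (hval x (hR hx)) hc0
    _ ≤ ∑ x ∈ R, (f univ - f (univ \ {x})) := by
        apply Finset.sum_le_sum
        intro x _
        exact hcx x
    _ ≤ f R := hlow R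
end

section
/- Resilient version via element exchange: let f be normalized, monotone, submodular with curvature ν, and let A^sol, A* ⊆ Ω both have cardinality k ≥ α with the property that f({a}) ≥ f({b}) for all a ∈ A^sol and all b ∈ A* \ A^sol. Then there exists a subset R* ⊆ A* with |A* \ R*| = α such that min_{B ⊆ A^sol, |B| ≤ α} f(A^sol \ B) ≥ (1-ν) f(R*). -/
open Finset

theorem stmt10 {Ω : Type*} [Fintype Ω] [DecidableEq Ω] [Nonempty Ω]
    (f : Finset Ω → ℝ)
    (hnorm : f ∅ = 0)
    (hmono : ∀ A B : Finset Ω, A ⊆ B → f A ≤ f B)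
    (hsub : ∀ A B : Finset Ω, f A + f B ≥ f (A ∪ B) + f (A ∩ B))
    (hpos : ∀ x : Ω, 0 < f {x})
    (ν : ℝ)
    (hν : ν = 1 - (univ : Finset Ω).inf' univ_nonempty
      (fun x => (f univ - f (univ \ {x})) / f {x}))
    (α k : ℕ) (hαk : α ≤ k)
    (Asol Astar : Finset Ω) (hAsol : Asol.card = k) (hAstar : Astar.card = k)
    (hgreedy : ∀ a ∈ Asol, ∀ b ∈ Astar \ Asol, f {a} ≥ f {b}) :
    ∃ Rstar ⊆ Astar, (Astar \ Rstar).card = α ∧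
      resVal α f Asol ≥ (1 - ν) * f Rstar := by
  set g : Ω → ℝ := fun x => f {x} with hg
  have hg0 : ∀ x, 0 ≤ g x := fun x => (hpos x).le
  have hfnn : ∀ S : Finset Ω, 0 ≤ f S := by
    intro S; rw [← hnorm]; exact hmono _ _ (empty_subset S)
  -- Lemma A : subadditivity over singletons
  have hA : ∀ S : Finset Ω, f S ≤ ∑ x ∈ S, g x := by
    intro S
    induction S using Finset.induction_on with
    | empty => simp [hnorm]
    | @insert a s hnotmem ih =>
      rw [Finset.sum_insert hnotmem]
      have h1 := hsub {a} s
      have h2 : ({a} : Finset Ω) ∪ s = insert a s := by ext x; simp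
      rw [h2] at h1
      have h3 : 0 ≤ f ({a} ∩ s) := hfnn _
      have : f (insert a s) ≤ f {a} + f s := by linarith
      calc f (insert a s) ≤ f {a} + f s := this
        _ ≤ g a + ∑ x ∈ s, g x := by simp only [hg]; linarith
  -- Lemma B : lower bound via marginal gains w.r.t. univ
  have hLB : ∀ S : Finset Ω, ∑ x ∈ S, (f univ - f (univ \ {x})) ≤ f S := by
    intro S
    induction S using Finset.induction_on with
    | empty => simp [hnorm]
    | @insert a s hnotmem ih =>
      have h1 := hsub (insert a s) (univ \ {a})
      have h2 : insert a s ∪ (univ \ {a}) = univ := by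
        ext x; by_cases hx : x = a <;> simp [hx]
      have h3 : insert a s ∩ (univ \ {a}) = s := by
        ext x
        simp only [Finset.mem_inter, Finset.mem_insert, Finset.mem_sdiff, Finset.mem_univ,
          Finset.mem_singleton, true_and]
        constructor
        · rintro ⟨h | h, hne⟩
          · exact absurd h hne
          · exact h
        · intro h; exact ⟨Or.inr h, fun he => hnotmem (he ▸ h)⟩
      rw [h2, h3] at h1
      rw [Finset.sum_insert hnotmem]
      linarith
  -- curvature facts
  have hq0 : (0:ℝ) ≤ 1 - ν := by
    rw [hν, sub_sub_cancel]
    apply Finset.le_inf'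
    intro x _
    exact div_nonneg (by linarith [hmono (univ \ {x}) univ sdiff_subset]) (hpos x).le
  have hC : ∀ x : Ω, (1 - ν) * g x ≤ f univ - f (univ \ {x}) := by
    intro x
    have h1 : (1 - ν) ≤ (f univ - f (univ \ {x})) / f {x} := by
      rw [hν, sub_sub_cancel]
      exact Finset.inf'_le _ (mem_univ x)
    calc (1 - ν) * g x ≤ ((f univ - f (univ \ {x})) / f {x}) * f {x} :=
          mul_le_mul_of_nonneg_right h1 (hg0 x)
      _ = f univ - f (univ \ {x}) := div_mul_cancel₀ _ (ne_of_gt (hpos x))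
  -- domination lemma
  have hdom : ∀ s t : Finset Ω, s.card = t.card → (∀ b ∈ s, ∀ a ∈ t, g b ≤ g a) →
      ∑ x ∈ s, g x ≤ ∑ x ∈ t, g x := by
    intro s t hcard hle
    rcases t.eq_empty_or_nonempty with rfl | ht
    · have : s = ∅ := Finset.card_eq_zero.mp (by simpa using hcard)
      simp [this]
    · have h1 : ∑ x ∈ s, g x ≤ s.card • t.inf' ht g :=
        Finset.sum_le_card_nsmul s g _ (fun b hb => Finset.le_inf' ht g (fun a ha => hle b hb a ha))
      have h2 : t.card • t.inf' ht g ≤ ∑ x ∈ t, g x :=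
        Finset.card_nsmul_le_sum t g _ (fun a ha => Finset.inf'_le g ha)
      rw [hcard] at h1
      linarith
  -- choose T : min-sum subset of Asol of size k - α
  have hcard_ineq : k - α ≤ Asol.card := by rw [hAsol]; omega
  obtain ⟨T, hTsub, hTcard, hTmin⟩ : ∃ T ⊆ Asol, T.card = k - α ∧
      ∀ T' ⊆ Asol, T'.card = k - α → ∑ x ∈ T, g x ≤ ∑ x ∈ T', g x := by
    obtain ⟨T0, hT0, hT0c⟩ := Finset.exists_subset_card_eq hcard_ineq
    obtain ⟨T, hTmem, hTmin⟩ := Finset.exists_min_image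
      (Asol.powerset.filter fun t => t.card = k - α) (fun t => ∑ x ∈ t, g x)
      ⟨T0, by simp [Finset.mem_filter, Finset.mem_powerset, hT0, hT0c]⟩
    simp only [Finset.mem_filter, Finset.mem_powerset] at hTmem
    exact ⟨T, hTmem.1, hTmem.2, fun T' h1 h2 =>
      hTmin T' (by simp [Finset.mem_filter, Finset.mem_powerset, h1, h2])⟩
  -- choose E' ⊆ Astar \ Asol with card = (T \ Astar).card
  have hsd : (T \ Astar).card ≤ (Astar \ Asol).card := by
    have h1 : (T \ Astar).card ≤ (Asol \ Astar).card :=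
      Finset.card_le_card (Finset.sdiff_subset_sdiff hTsub le_rfl)
    have h2 : (Asol \ Astar).card = (Astar \ Asol).card :=
      Finset.card_sdiff_comm (by rw [hAsol, hAstar])
    omega
  obtain ⟨E', hE'sub, hE'card⟩ := Finset.exists_subset_card_eq hsd
  have hdisj : Disjoint (T ∩ Astar) E' := by
    rw [Finset.disjoint_left]
    intro x hx hx'
    exact (Finset.mem_sdiff.mp (hE'sub hx')).2 (hTsub (Finset.mem_inter.mp hx).1)
  have hRsub : (T ∩ Astar) ∪ E' ⊆ Astar :=
    Finset.union_subset Finset.inter_subset_right (hE'sub.trans Finset.sdiff_subset)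
  have hRcard : ((T ∩ Astar) ∪ E').card = k - α := by
    rw [Finset.card_union_of_disjoint hdisj, hE'card, Finset.card_inter_add_card_sdiff, hTcard]
  -- key sum bound : sum over R* ≤ sum over T
  have chain2 : ∑ x ∈ (T ∩ Astar) ∪ E', g x ≤ ∑ x ∈ T, g x := by
    rw [Finset.sum_union hdisj, ← Finset.sum_inter_add_sum_sdiff T Astar g]
    have : ∑ x ∈ E', g x ≤ ∑ x ∈ T \ Astar, g x := by
      apply hdom _ _ hE'card
      intro b hb a ha
      exact hgreedy a (hTsub (Finset.mem_sdiff.mp ha).1) b (hE'sub hb)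
    linarith
  refine ⟨(T ∩ Astar) ∪ E', hRsub, ?_, ?_⟩
  · rw [Finset.card_sdiff_of_subset hRsub, hRcard, hAstar]; omega
  · rw [ge_iff_le, resVal]
    apply Finset.le_inf'
    intro B hB
    simp only [Finset.mem_filter, Finset.mem_powerset] at hB
    obtain ⟨hBsub, hBcard⟩ := hB
    have hcard2 : k - α ≤ (Asol \ B).card := by
      rw [Finset.card_sdiff_of_subset hBsub, hAsol]
      have := Finset.card_le_card hBsub
      omega
    obtain ⟨T', hT'sub, hT'card⟩ := Finset.exists_subset_card_eq hcard2
    have chain1 : ∑ x ∈ T, g x ≤ ∑ x ∈ Asol \ B, g x :=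
      le_trans (hTmin T' (hT'sub.trans Finset.sdiff_subset) hT'card)
        (Finset.sum_le_sum_of_subset_of_nonneg hT'sub (fun i _ _ => hg0 i))
    calc (1 - ν) * f ((T ∩ Astar) ∪ E')
        ≤ (1 - ν) * ∑ x ∈ (T ∩ Astar) ∪ E', g x := mul_le_mul_of_nonneg_left (hA _) hq0
      _ ≤ (1 - ν) * ∑ x ∈ Asol \ B, g x :=
          mul_le_mul_of_nonneg_left (chain2.trans chain1) hq0
      _ = ∑ x ∈ Asol \ B, (1 - ν) * g x := by rw [Finset.mul_sum]
      _ ≤ ∑ x ∈ Asol \ B, (f univ - f (univ \ {x})) := Finset.sum_le_sum (fun x _ => hC x)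
      _ ≤ f (Asol \ B) := hLB _
end
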